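/- For a finite poset P on [n], the braid relations π τ_j τ_{j+1} τ_j = π τ_{j+1} τ_j τ_{j+1} hold for all 1 ≤ j < n−1 and all linear extensions π of P if and only if P is a disjoint union of chains. -/

import Mathlib

open scoped Classical

/-- A partial order on `Fin n`, given as a plain structure (so that the standard
linear order on `Fin n` is unaffected). -/
structure FinPoset (n : ℕ) where
  le : Fin n → Fin n → Prop
  le_refl : ∀ a, le a a
  le_trans : ∀ a b c, le a b → le b c → le a c
  le_antisymm : ∀ a b, le a b → le b a → a = b

/-- The strict order associated to a `FinPoset`. -/
def FinPoset.lt {n : ℕ} (P : FinPoset n) (a b : Fin n) : Prop :=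
  P.le a b ∧ a ≠ b

variable {n : ℕ}

/-- `tauOp P i π` is the operator `τ_i` (0-indexed) acting on the permutation `π`
(in one-line notation `π k` is the entry at position `k`): it swaps the entries at
positions `i` and `i+1` if they are incomparable in `P`, else fixes `π`. -/
noncomputable def tauOp (P : FinPoset n) (i : ℕ) (π : Equiv.Perm (Fin n)) :
    Equiv.Perm (Fin n) :=
  if h : i + 1 < n then
    if ¬ P.le (π ⟨i, Nat.lt_of_succ_lt h⟩) (π ⟨i + 1, h⟩) ∧
        ¬ P.le (π ⟨i + 1, h⟩) (π ⟨i, Nat.lt_of_succ_lt h⟩) then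
      π * Equiv.swap ⟨i, Nat.lt_of_succ_lt h⟩ ⟨i + 1, h⟩
    else π
  else π

/-- `π` is a linear extension of the poset `P` on `Fin n`: if `a ≺ b` in `P`
then the position of `a` precedes the position of `b`. -/
def IsLinearExtension (P : FinPoset n) (π : Equiv.Perm (Fin n)) : Prop :=
  ∀ a b : Fin n, P.lt a b → π.symm a < π.symm b

/-- The extended promotion operator `∂_j = τ_j τ_{j+1} ⋯ τ_{n-2}` (0-indexed),
applied on the right to `π`. -/
noncomputable def promoOp (P : FinPoset n) (j : ℕ) (π : Equiv.Perm (Fin n)) :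
    Equiv.Perm (Fin n) :=
  (List.range (n - 1 - j)).foldl (fun σ k => tauOp P (j + k) σ) π

/-- `P` is a disjoint union of chains: the ground set can be partitioned (via the
fibers of a map `f`) into totally ordered subsets such that comparable elements
always lie in the same part. -/
def IsUnionOfChains (P : FinPoset n) : Prop :=
  ∃ f : Fin n → Fin n,
    (∀ a b : Fin n, f a = f b → (P.le a b ∨ P.le b a)) ∧
    (∀ a b : Fin n, P.le a b → f a = f b)

def PComp (P : FinPoset n) (a b : Fin n) : Prop := P.le a b ∨ P.le b a

lemma PComp.symm {P : FinPoset n} {a b : Fin n} (h : PComp P a b) : PComp P b a := h.elim Or.inr Or.inl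

lemma pcomp_refl (P : FinPoset n) (a : Fin n) : PComp P a a := Or.inl (P.le_refl a)

lemma tauOp_of_comp (P : FinPoset n) {i : ℕ} (h : i + 1 < n) {π : Equiv.Perm (Fin n)}
    (hc : PComp P (π ⟨i, Nat.lt_of_succ_lt h⟩) (π ⟨i + 1, h⟩)) :
    tauOp P i π = π := by
  rw [tauOp, dif_pos h, if_neg]
  rintro ⟨h1, h2⟩
  rcases hc with hc | hc
  exacts [h1 hc, h2 hc]

lemma tauOp_of_incomp (P : FinPoset n) {i : ℕ} (h : i + 1 < n) {π : Equiv.Perm (Fin n)}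
    (hic : ¬ PComp P (π ⟨i, Nat.lt_of_succ_lt h⟩) (π ⟨i + 1, h⟩)) :
    tauOp P i π = π * Equiv.swap ⟨i, Nat.lt_of_succ_lt h⟩ ⟨i + 1, h⟩ := by
  rw [tauOp, dif_pos h, if_pos ⟨fun hle => hic (Or.inl hle), fun hle => hic (Or.inr hle)⟩]

section Triple

variable (P : FinPoset n)

lemma braid_holds {j : ℕ} (h : j + 2 < n) (π : Equiv.Perm (Fin n))
    (htr : ∀ a b c, PComp P a b → PComp P b c → PComp P a c) :
    tauOp P j (tauOp P (j+1) (tauOp P j π)) = tauOp P (j+1) (tauOp P j (tauOp P (j+1) π)) := by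
  have h1 : j + 1 < n := Nat.lt_of_succ_lt h
  have h2 : j + 1 + 1 < n := h
  let p0 : Fin n := ⟨j, Nat.lt_of_succ_lt h1⟩
  let p1 : Fin n := ⟨j + 1, h1⟩
  let p2 : Fin n := ⟨j + 1 + 1, h2⟩
  have hne01 : p0 ≠ p1 := by simp only [p0, p1, ne_eq, Fin.mk.injEq]; omega
  have hne02 : p0 ≠ p2 := by simp only [p0, p2, ne_eq, Fin.mk.injEq]; omega
  have hne12 : p1 ≠ p2 := by simp only [p1, p2, ne_eq, Fin.mk.injEq]; omega
  let s1 : Equiv.Perm (Fin n) := Equiv.swap p0 p1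
  let s2 : Equiv.Perm (Fin n) := Equiv.swap p1 p2
  have m10 : ∀ σ : Equiv.Perm (Fin n), (σ * s1) p0 = σ p1 := fun σ => by
    rw [Equiv.Perm.mul_apply]; exact congrArg σ (Equiv.swap_apply_left _ _)
  have m11 : ∀ σ : Equiv.Perm (Fin n), (σ * s1) p1 = σ p0 := fun σ => by
    rw [Equiv.Perm.mul_apply]; exact congrArg σ (Equiv.swap_apply_right _ _)
  have m12 : ∀ σ : Equiv.Perm (Fin n), (σ * s1) p2 = σ p2 := fun σ => by
    rw [Equiv.Perm.mul_apply]
    exact congrArg σ (Equiv.swap_apply_of_ne_of_ne hne02.symm hne12.symm)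
  have m20 : ∀ σ : Equiv.Perm (Fin n), (σ * s2) p0 = σ p0 := fun σ => by
    rw [Equiv.Perm.mul_apply]
    exact congrArg σ (Equiv.swap_apply_of_ne_of_ne hne01 hne02)
  have m21 : ∀ σ : Equiv.Perm (Fin n), (σ * s2) p1 = σ p2 := fun σ => by
    rw [Equiv.Perm.mul_apply]; exact congrArg σ (Equiv.swap_apply_left _ _)
  have m22 : ∀ σ : Equiv.Perm (Fin n), (σ * s2) p2 = σ p1 := fun σ => by
    rw [Equiv.Perm.mul_apply]; exact congrArg σ (Equiv.swap_apply_right _ _)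
  by_cases cxy : PComp P (π p0) (π p1) <;> by_cases cyz : PComp P (π p1) (π p2)
  · -- TT
    have eA : tauOp P j π = π := tauOp_of_comp P h1 cxy
    have eB : tauOp P (j+1) π = π := tauOp_of_comp P h2 cyz
    rw [eA, eB, eA, eB]
  · -- T F
    have cxz : ¬ PComp P (π p0) (π p2) := fun c => cyz (htr _ _ _ cxy.symm c)
    have eA : tauOp P j π = π := tauOp_of_comp P h1 cxy
    have eB : tauOp P (j+1) π = π * s2 := tauOp_of_incomp P h2 cyz
    have eC : tauOp P j (π * s2) = π * s2 * s1 := by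
      refine tauOp_of_incomp P h1 ?_
      show ¬ PComp P ((π * s2) p0) ((π * s2) p1)
      rw [m20, m21]; exact cxz
    have eD : tauOp P (j+1) (π * s2 * s1) = π * s2 * s1 := by
      refine tauOp_of_comp P h2 ?_
      show PComp P ((π * s2 * s1) p1) ((π * s2 * s1) p2)
      rw [m11, m12, m20, m22]; exact cxy
    rw [eA, eB, eC, eD]
  · -- F T
    have cxz : ¬ PComp P (π p0) (π p2) := fun c => cxy (htr _ _ _ c cyz.symm)
    have eA : tauOp P j π = π * s1 := tauOp_of_incomp P h1 cxy
    have eB : tauOp P (j+1) π = π := tauOp_of_comp P h2 cyz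
    have eC : tauOp P (j+1) (π * s1) = π * s1 * s2 := by
      refine tauOp_of_incomp P h2 ?_
      show ¬ PComp P ((π * s1) p1) ((π * s1) p2)
      rw [m11, m12]; exact cxz
    have eD : tauOp P j (π * s1 * s2) = π * s1 * s2 := by
      refine tauOp_of_comp P h1 ?_
      show PComp P ((π * s1 * s2) p0) ((π * s1 * s2) p1)
      rw [m20, m21, m10, m12]; exact cyz
    rw [eB, eA, eC, eD]
  · by_cases cxz : PComp P (π p0) (π p2)
    · -- F F T
      have eA : tauOp P j π = π * s1 := tauOp_of_incomp P h1 cxy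
      have eB : tauOp P (j+1) (π * s1) = π * s1 := by
        refine tauOp_of_comp P h2 ?_
        show PComp P ((π * s1) p1) ((π * s1) p2)
        rw [m11, m12]; exact cxz
      have eC : tauOp P j (π * s1) = π * s1 * s1 := by
        refine tauOp_of_incomp P h1 ?_
        show ¬ PComp P ((π * s1) p0) ((π * s1) p1)
        rw [m10, m11]; exact fun c => cxy c.symm
      have eD : tauOp P (j+1) π = π * s2 := tauOp_of_incomp P h2 cyz
      have eE : tauOp P j (π * s2) = π * s2 := by
        refine tauOp_of_comp P h1 ?_
        show PComp P ((π * s2) p0) ((π * s2) p1)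
        rw [m20, m21]; exact cxz
      have eF : tauOp P (j+1) (π * s2) = π * s2 * s2 := by
        refine tauOp_of_incomp P h2 ?_
        show ¬ PComp P ((π * s2) p1) ((π * s2) p2)
        rw [m21, m22]; exact fun c => cyz c.symm
      rw [eA, eB, eC, eD, eE, eF, mul_assoc, mul_assoc, Equiv.swap_mul_self,
        Equiv.swap_mul_self, mul_one]
    · -- F F F
      have eA : tauOp P j π = π * s1 := tauOp_of_incomp P h1 cxy
      have eB : tauOp P (j+1) (π * s1) = π * s1 * s2 := by
        refine tauOp_of_incomp P h2 ?_
        show ¬ PComp P ((π * s1) p1) ((π * s1) p2)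
        rw [m11, m12]; exact cxz
      have eC : tauOp P j (π * s1 * s2) = π * s1 * s2 * s1 := by
        refine tauOp_of_incomp P h1 ?_
        show ¬ PComp P ((π * s1 * s2) p0) ((π * s1 * s2) p1)
        rw [m20, m21, m10, m12]; exact fun c => cyz c
      have eD : tauOp P (j+1) π = π * s2 := tauOp_of_incomp P h2 cyz
      have eE : tauOp P j (π * s2) = π * s2 * s1 := by
        refine tauOp_of_incomp P h1 ?_
        show ¬ PComp P ((π * s2) p0) ((π * s2) p1)
        rw [m20, m21]; exact cxz
      have eF : tauOp P (j+1) (π * s2 * s1) = π * s2 * s1 * s2 := by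
        refine tauOp_of_incomp P h2 ?_
        show ¬ PComp P ((π * s2 * s1) p1) ((π * s2 * s1) p2)
        rw [m11, m12, m20, m22]; exact fun c => cxy c
      rw [eA, eB, eC, eD, eE, eF]
      have k1 : Equiv.swap p0 p2 = s1 * s2 * s1 :=
        calc Equiv.swap p0 p2 = Equiv.swap (s1 p1) (s1 p2) := by
              rw [Equiv.swap_apply_right, Equiv.swap_apply_of_ne_of_ne hne02.symm hne12.symm]
          _ = s1 * s2 * s1⁻¹ := Equiv.swap_apply_apply s1 p1 p2
          _ = s1 * s2 * s1 := by rw [Equiv.swap_inv]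
      have k2 : Equiv.swap p0 p2 = s2 * s1 * s2 :=
        calc Equiv.swap p0 p2 = Equiv.swap (s2 p0) (s2 p1) := by
              rw [Equiv.swap_apply_left, Equiv.swap_apply_of_ne_of_ne hne01 hne02]
          _ = s2 * s1 * s2⁻¹ := Equiv.swap_apply_apply s2 p0 p1
          _ = s2 * s1 * s2 := by rw [Equiv.swap_inv]
      have key : s1 * s2 * s1 = s2 * s1 * s2 := k1.symm.trans k2
      simp only [mul_assoc] at key ⊢
      rw [key]


lemma braid_fails_upper {j : ℕ} (h : j + 2 < n) (π : Equiv.Perm (Fin n))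
    (hac : ¬ PComp P (π ⟨j, Nat.lt_of_succ_lt (Nat.lt_of_succ_lt h)⟩) (π ⟨j + 1, Nat.lt_of_succ_lt h⟩))
    (hcb : PComp P (π ⟨j + 1, Nat.lt_of_succ_lt h⟩) (π ⟨j + 1 + 1, h⟩))
    (hab : PComp P (π ⟨j, Nat.lt_of_succ_lt (Nat.lt_of_succ_lt h)⟩) (π ⟨j + 1 + 1, h⟩)) :
    tauOp P j (tauOp P (j+1) (tauOp P j π)) ≠ tauOp P (j+1) (tauOp P j (tauOp P (j+1) π)) := by
  have h1 : j + 1 < n := Nat.lt_of_succ_lt h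
  have h2 : j + 1 + 1 < n := h
  let p0 : Fin n := ⟨j, Nat.lt_of_succ_lt h1⟩
  let p1 : Fin n := ⟨j + 1, h1⟩
  let p2 : Fin n := ⟨j + 1 + 1, h2⟩
  have hne01 : p0 ≠ p1 := by simp only [p0, p1, ne_eq, Fin.mk.injEq]; omega
  have hne02 : p0 ≠ p2 := by simp only [p0, p2, ne_eq, Fin.mk.injEq]; omega
  have hne12 : p1 ≠ p2 := by simp only [p1, p2, ne_eq, Fin.mk.injEq]; omega
  let s1 : Equiv.Perm (Fin n) := Equiv.swap p0 p1
  have m10 : ∀ σ : Equiv.Perm (Fin n), (σ * s1) p0 = σ p1 := fun σ => by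
    rw [Equiv.Perm.mul_apply]; exact congrArg σ (Equiv.swap_apply_left _ _)
  have m11 : ∀ σ : Equiv.Perm (Fin n), (σ * s1) p1 = σ p0 := fun σ => by
    rw [Equiv.Perm.mul_apply]; exact congrArg σ (Equiv.swap_apply_right _ _)
  have m12 : ∀ σ : Equiv.Perm (Fin n), (σ * s1) p2 = σ p2 := fun σ => by
    rw [Equiv.Perm.mul_apply]
    exact congrArg σ (Equiv.swap_apply_of_ne_of_ne hne02.symm hne12.symm)
  have hac' : ¬ PComp P (π p0) (π p1) := hac
  have hcb' : PComp P (π p1) (π p2) := hcb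
  have hab' : PComp P (π p0) (π p2) := hab
  have eA : tauOp P j π = π * s1 := tauOp_of_incomp P h1 hac'
  have eB : tauOp P (j+1) (π * s1) = π * s1 := by
    refine tauOp_of_comp P h2 ?_
    show PComp P ((π * s1) p1) ((π * s1) p2)
    rw [m11, m12]; exact hab'
  have eC : tauOp P j (π * s1) = π * s1 * s1 := by
    refine tauOp_of_incomp P h1 ?_
    show ¬ PComp P ((π * s1) p0) ((π * s1) p1)
    rw [m10, m11]; exact fun c => hac' c.symm
  have eD : tauOp P (j+1) π = π := tauOp_of_comp P h2 hcb'
  rw [eA, eB, eC, eD, eA, eB, mul_assoc, Equiv.swap_mul_self, mul_one]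
  intro hEq
  have := congrArg (fun σ : Equiv.Perm (Fin n) => σ p0) hEq
  rw [m10] at this
  exact hne01 (π.injective this.symm).symm

lemma braid_fails_lower {j : ℕ} (h : j + 2 < n) (π : Equiv.Perm (Fin n))
    (hba : PComp P (π ⟨j, Nat.lt_of_succ_lt (Nat.lt_of_succ_lt h)⟩) (π ⟨j + 1, Nat.lt_of_succ_lt h⟩))
    (hac : ¬ PComp P (π ⟨j + 1, Nat.lt_of_succ_lt h⟩) (π ⟨j + 1 + 1, h⟩))
    (hbc : PComp P (π ⟨j, Nat.lt_of_succ_lt (Nat.lt_of_succ_lt h)⟩) (π ⟨j + 1 + 1, h⟩)) :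
    tauOp P j (tauOp P (j+1) (tauOp P j π)) ≠ tauOp P (j+1) (tauOp P j (tauOp P (j+1) π)) := by
  have h1 : j + 1 < n := Nat.lt_of_succ_lt h
  have h2 : j + 1 + 1 < n := h
  let p0 : Fin n := ⟨j, Nat.lt_of_succ_lt h1⟩
  let p1 : Fin n := ⟨j + 1, h1⟩
  let p2 : Fin n := ⟨j + 1 + 1, h2⟩
  have hne01 : p0 ≠ p1 := by simp only [p0, p1, ne_eq, Fin.mk.injEq]; omega
  have hne02 : p0 ≠ p2 := by simp only [p0, p2, ne_eq, Fin.mk.injEq]; omega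
  have hne12 : p1 ≠ p2 := by simp only [p1, p2, ne_eq, Fin.mk.injEq]; omega
  let s2 : Equiv.Perm (Fin n) := Equiv.swap p1 p2
  have m20 : ∀ σ : Equiv.Perm (Fin n), (σ * s2) p0 = σ p0 := fun σ => by
    rw [Equiv.Perm.mul_apply]
    exact congrArg σ (Equiv.swap_apply_of_ne_of_ne hne01 hne02)
  have m21 : ∀ σ : Equiv.Perm (Fin n), (σ * s2) p1 = σ p2 := fun σ => by
    rw [Equiv.Perm.mul_apply]; exact congrArg σ (Equiv.swap_apply_left _ _)
  have m22 : ∀ σ : Equiv.Perm (Fin n), (σ * s2) p2 = σ p1 := fun σ => by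
    rw [Equiv.Perm.mul_apply]; exact congrArg σ (Equiv.swap_apply_right _ _)
  have hba' : PComp P (π p0) (π p1) := hba
  have hac' : ¬ PComp P (π p1) (π p2) := hac
  have hbc' : PComp P (π p0) (π p2) := hbc
  have eA : tauOp P j π = π := tauOp_of_comp P h1 hba'
  have eB : tauOp P (j+1) π = π * s2 := tauOp_of_incomp P h2 hac'
  have eC : tauOp P j (π * s2) = π * s2 := by
    refine tauOp_of_comp P h1 ?_
    show PComp P ((π * s2) p0) ((π * s2) p1)
    rw [m20, m21]; exact hbc'
  have eD : tauOp P (j+1) (π * s2) = π * s2 * s2 := by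
    refine tauOp_of_incomp P h2 ?_
    show ¬ PComp P ((π * s2) p1) ((π * s2) p2)
    rw [m21, m22]; exact fun c => hac' c.symm
  rw [eA, eB, eC, eD, mul_assoc, Equiv.swap_mul_self, mul_one]
  intro hEq
  have := congrArg (fun σ : Equiv.Perm (Fin n) => σ p1) hEq
  rw [m21] at this
  exact hne12 (π.injective this.symm)

end Triple


lemma exists_sorted_perm (s : Fin n → Fin n → Prop) (hs : IsLinearOrder (Fin n) s) :
    ∃ π : Equiv.Perm (Fin n), ∀ i j : Fin n, i < j → s (π i) (π j) := by
  haveI := hs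
  haveI : DecidableRel s := fun a b => Classical.dec _
  set L : List (Fin n) := Finset.univ.sort s with hL
  have hlen : L.length = n := by
    rw [hL, Finset.length_sort, Finset.card_univ, Fintype.card_fin]
  have hnd : L.Nodup := Finset.sort_nodup Finset.univ s
  have hmem : ∀ x : Fin n, x ∈ L := fun x => (Finset.mem_sort s).2 (Finset.mem_univ x)
  have hsorted : L.Pairwise s := Finset.pairwise_sort Finset.univ s
  let e : Fin L.length ≃ Fin n := List.Nodup.getEquivOfForallMemList L hnd hmem
  refine ⟨(finCongr hlen).symm.trans e, fun i j hij => ?_⟩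
  have : s (L.get ((finCongr hlen).symm i)) (L.get ((finCongr hlen).symm j)) :=
    hsorted.rel_get_of_lt (by simpa using hij)
  simpa [e, Equiv.trans_apply, List.Nodup.getEquivOfForallMemList_apply] using this

lemma exists_consec (P : FinPoset n) (u v w : Fin n) (blk : Fin n → ℕ)
    (hmono : ∀ x y, P.lt x y → blk x ≤ blk y)
    (hu' : blk u = 1) (hu : ∀ x, blk x = 1 → x = u)
    (hv' : blk v = 2) (hv : ∀ x, blk x = 2 → x = v)
    (hw' : blk w = 3) (hw : ∀ x, blk x = 3 → x = w) :
    ∃ (π : Equiv.Perm (Fin n)) (j : ℕ) (h2 : j + 2 < n),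
      IsLinearExtension P π ∧
      π ⟨j, Nat.lt_of_succ_lt (Nat.lt_of_succ_lt h2)⟩ = u ∧
      π ⟨j + 1, Nat.lt_of_succ_lt h2⟩ = v ∧
      π ⟨j + 1 + 1, h2⟩ = w := by
  haveI : IsPartialOrder (Fin n) P.le :=
    { refl := P.le_refl, trans := P.le_trans, antisymm := P.le_antisymm }
  obtain ⟨s₀, hs₀, hext⟩ := extend_partialOrder P.le
  haveI := hs₀
  set s : Fin n → Fin n → Prop := fun x y => blk x < blk y ∨ (blk x = blk y ∧ s₀ x y)
    with hsdef
  have hs : IsLinearOrder (Fin n) s := by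
    refine { refl := fun x => Or.inr ⟨rfl, refl_of s₀ x⟩, trans := ?_, antisymm := ?_,
             total := ?_ }
    · rintro a b c (hab | ⟨hab, hab'⟩) (hbc | ⟨hbc, hbc'⟩)
      · exact Or.inl (lt_trans hab hbc)
      · exact Or.inl (by omega)
      · exact Or.inl (by omega)
      · exact Or.inr ⟨hab.trans hbc, trans_of s₀ hab' hbc'⟩
    · rintro a b (hab | ⟨hab, hab'⟩) (hba | ⟨hba, hba'⟩)
      · omega
      · omega
      · omega
      · exact antisymm_of s₀ hab' hba'
    · intro a b
      rcases lt_trichotomy (blk a) (blk b) with hlt | heq | hgt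
      · exact Or.inl (Or.inl hlt)
      · rcases total_of s₀ a b with h0 | h0
        · exact Or.inl (Or.inr ⟨heq, h0⟩)
        · exact Or.inr (Or.inr ⟨heq.symm, h0⟩)
      · exact Or.inr (Or.inl hgt)
  obtain ⟨π, hπ⟩ := exists_sorted_perm s hs
  haveI := hs
  have happ : ∀ x : Fin n, π (π.symm x) = x := fun x => π.apply_symm_apply x
  have hlt : ∀ x y : Fin n, s x y → x ≠ y → π.symm x < π.symm y := by
    intro x y hxy hne
    rcases lt_trichotomy (π.symm x) (π.symm y) with h0 | h0 | h0
    · exact h0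
    · exact absurd (π.symm.injective h0) hne
    · have := hπ _ _ h0
      rw [happ, happ] at this
      exact absurd (antisymm_of s hxy this) hne
  have hle : IsLinearExtension P π := by
    intro a b hab
    refine hlt a b ?_ hab.2
    rcases lt_or_eq_of_le (hmono a b hab) with h0 | h0
    · exact Or.inl h0
    · exact Or.inr ⟨h0, hext a b hab.1⟩
  have hneuv : u ≠ v := fun e => by rw [e, hv'] at hu'; omega
  have hnevw : v ≠ w := fun e => by rw [e, hw'] at hv'; omega
  have hiuv : π.symm u < π.symm v := hlt _ _ (Or.inl (by omega)) hneuv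
  have hivw : π.symm v < π.symm w := hlt _ _ (Or.inl (by omega)) hnevw
  have hiuv' : (π.symm u : ℕ) < π.symm v := hiuv
  have hivw' : (π.symm v : ℕ) < π.symm w := hivw
  -- no element strictly between two given ones (in position) whose blocks pinch
  have middle : ∀ (x y : Fin n), π.symm x < π.symm y → ((π.symm x : ℕ) + 1 < π.symm y) →
      ∃ z : Fin n, z ≠ x ∧ z ≠ y ∧ s x z ∧ s z y := by
    intro x y hxy hmid
    refine ⟨π ⟨(π.symm x : ℕ) + 1, lt_trans hmid (π.symm y).isLt⟩, ?_, ?_, ?_, ?_⟩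
    · intro e
      have e' := congrArg π.symm e
      rw [Equiv.symm_apply_apply] at e'
      have := congrArg Fin.val e'
      simp only [Fin.val_mk] at this
      omega
    · intro e
      have e' := congrArg π.symm e
      rw [Equiv.symm_apply_apply] at e'
      have := congrArg Fin.val e'
      simp only [Fin.val_mk] at this
      omega
    · have := hπ (π.symm x) ⟨(π.symm x : ℕ) + 1, lt_trans hmid (π.symm y).isLt⟩
        (by rw [Fin.lt_def]; simp)
      rwa [happ] at this
    · have := hπ ⟨(π.symm x : ℕ) + 1, lt_trans hmid (π.symm y).isLt⟩ (π.symm y)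
        (by rw [Fin.lt_def]; simpa using hmid)
      rwa [happ] at this
  have consec1 : (π.symm v : ℕ) = (π.symm u : ℕ) + 1 := by
    by_contra hne'
    obtain ⟨z, hzu, hzv, huz, hzv'⟩ := middle u v hiuv (by omega)
    have b1 : 1 < blk z := by
      rcases huz with h0 | ⟨h0, _⟩
      · omega
      · exact absurd (hu z (by omega)) hzu
    have b2 : blk z < 2 := by
      rcases hzv' with h0 | ⟨h0, _⟩
      · omega
      · exact absurd (hv z (by omega)) hzv
    omega
  have consec2 : (π.symm w : ℕ) = (π.symm v : ℕ) + 1 := by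
    by_contra hne'
    obtain ⟨z, hzv, hzw, hvz, hzw'⟩ := middle v w hivw (by omega)
    have b1 : 2 < blk z := by
      rcases hvz with h0 | ⟨h0, _⟩
      · omega
      · exact absurd (hv z (by omega)) hzv
    have b2 : blk z < 3 := by
      rcases hzw' with h0 | ⟨h0, _⟩
      · omega
      · exact absurd (hw z (by omega)) hzw
    omega
  have hjlt : (π.symm u : ℕ) + 2 < n := by
    have := (π.symm w).isLt
    omega
  refine ⟨π, (π.symm u : ℕ), hjlt, hle, ?_, ?_, ?_⟩
  · have : (⟨(π.symm u : ℕ), Nat.lt_of_succ_lt (Nat.lt_of_succ_lt hjlt)⟩ : Fin n) = π.symm u :=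
      Fin.ext rfl
    rw [this, happ]
  · have : (⟨(π.symm u : ℕ) + 1, Nat.lt_of_succ_lt hjlt⟩ : Fin n) = π.symm v :=
      Fin.ext (by simp [consec1])
    rw [this, happ]
  · have : (⟨(π.symm u : ℕ) + 1 + 1, hjlt⟩ : Fin n) = π.symm w :=
      Fin.ext (by simp [consec2, consec1])
    rw [this, happ]

lemma FinPoset.lt_of_lt_of_le' (P : FinPoset n) {a b c : Fin n}
    (h1 : P.lt a b) (h2 : P.le b c) : P.lt a c := by
  refine ⟨P.le_trans _ _ _ h1.1 h2, ?_⟩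
  rintro rfl
  exact h1.2 (P.le_antisymm _ _ h1.1 h2)

lemma FinPoset.lt_of_le_of_lt' (P : FinPoset n) {a b c : Fin n}
    (h1 : P.le a b) (h2 : P.lt b c) : P.lt a c := by
  refine ⟨P.le_trans _ _ _ h1 h2.1, ?_⟩
  rintro rfl
  exact h2.2 (P.le_antisymm _ _ h2.1 h1)

lemma FinPoset.lt_trans' (P : FinPoset n) {a b c : Fin n}
    (h1 : P.lt a b) (h2 : P.lt b c) : P.lt a c :=
  P.lt_of_lt_of_le' h1 h2.1

lemma measure_lt (P : FinPoset n) {x y : Fin n} (hxy : P.lt x y) :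
    (Finset.univ.filter (fun z => P.lt z x)).card <
      (Finset.univ.filter (fun z => P.lt z y)).card := by
  apply Finset.card_lt_card
  rw [Finset.ssubset_iff_of_subset]
  · refine ⟨x, by simp [hxy], by rw [Finset.mem_filter]; exact fun h => h.2.2 rfl⟩
  · intro z hz
    simp only [Finset.mem_filter, Finset.mem_univ, true_and] at hz ⊢
    exact P.lt_of_lt_of_le' hz hxy.1

lemma forward_upper (P : FinPoset n)
    (H : ∀ j : ℕ, j + 2 < n → ∀ π : Equiv.Perm (Fin n), IsLinearExtension P π →
        tauOp P j (tauOp P (j + 1) (tauOp P j π)) =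
          tauOp P (j + 1) (tauOp P j (tauOp P (j + 1) π)))
    (a0 c0 b0 : Fin n) (hac0 : ¬ PComp P a0 c0) (hab0 : P.lt a0 b0) (hcb0 : P.lt c0 b0) :
    False := by
  classical
  set m : Fin n → ℕ := fun x => (Finset.univ.filter (fun z => P.lt z x)).card with hm
  set T : Finset (Fin n) := Finset.univ.filter
    (fun b => ∃ a c, ¬ PComp P a c ∧ P.lt a b ∧ P.lt c b) with hT
  have hTne : T.Nonempty := ⟨b0, by
    simp only [hT, Finset.mem_filter, Finset.mem_univ, true_and]
    exact ⟨a0, c0, hac0, hab0, hcb0⟩⟩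
  obtain ⟨b, hbT, hbmin⟩ := T.exists_min_image m hTne
  rw [hT, Finset.mem_filter] at hbT
  obtain ⟨-, a1, c1, hac1, hab1, hcb1⟩ := hbT
  have hbmin' : ∀ x, (∃ a c, ¬ PComp P a c ∧ P.lt a x ∧ P.lt c x) → ¬ P.lt x b := by
    intro x hx hxb
    have hxT : x ∈ T := by
      simp only [hT, Finset.mem_filter, Finset.mem_univ, true_and]; exact hx
    exact absurd (measure_lt P hxb) (not_lt.2 (hbmin x hxT))
  set A : Finset (Fin n) := Finset.univ.filter
    (fun a => P.lt a b ∧ ∃ c, ¬ PComp P a c ∧ P.lt c b) with hA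
  have hAne : A.Nonempty := ⟨a1, by
    simp only [hA, Finset.mem_filter, Finset.mem_univ, true_and]
    exact ⟨hab1, c1, hac1, hcb1⟩⟩
  obtain ⟨a, haA, hamax⟩ := A.exists_max_image m hAne
  rw [hA, Finset.mem_filter] at haA
  obtain ⟨-, hab, c2, hac2, hcb2⟩ := haA
  have hamax' : ∀ x, (P.lt x b ∧ ∃ c, ¬ PComp P x c ∧ P.lt c b) → ¬ P.lt a x := by
    intro x hx hax
    have hxA : x ∈ A := by
      simp only [hA, Finset.mem_filter, Finset.mem_univ, true_and]; exact hx
    exact absurd (measure_lt P hax) (not_lt.2 (hamax x hxA))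
  set C : Finset (Fin n) := Finset.univ.filter
    (fun c => P.lt c b ∧ ¬ PComp P a c) with hC
  have hCne : C.Nonempty := ⟨c2, by
    simp only [hC, Finset.mem_filter, Finset.mem_univ, true_and]; exact ⟨hcb2, hac2⟩⟩
  obtain ⟨c, hcC, hcmax⟩ := C.exists_max_image m hCne
  rw [hC, Finset.mem_filter] at hcC
  obtain ⟨-, hcb, hac⟩ := hcC
  have hcmax' : ∀ x, (P.lt x b ∧ ¬ PComp P a x) → ¬ P.lt c x := by
    intro x hx hcx
    have hxC : x ∈ C := by
      simp only [hC, Finset.mem_filter, Finset.mem_univ, true_and]; exact hx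
    exact absurd (measure_lt P hcx) (not_lt.2 (hcmax x hxC))
  -- the two "no element strictly between" claims
  have nb1 : ∀ x, ¬ (P.lt a x ∧ P.lt x b) := by
    rintro x ⟨hax, hxb⟩
    by_cases hxc : PComp P x c
    · rcases hxc with hxc | hxc
      · exact hac (Or.inl (P.le_trans _ _ _ hax.1 hxc))
      · by_cases hcx : c = x
        · exact hac (Or.inl (hcx ▸ hax).1)
        · exact hbmin' x ⟨a, c, hac, hax, ⟨hxc, hcx⟩⟩ hxb
    · exact hamax' x ⟨hxb, c, fun h => hxc h, hcb⟩ hax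
  have nb2 : ∀ y, ¬ (P.lt c y ∧ P.lt y b) := by
    rintro y ⟨hcy, hyb⟩
    by_cases hya : PComp P a y
    · rcases hya with hya | hya
      · by_cases hay : a = y
        · exact hac (Or.inr (hay ▸ hcy).1)
        · exact hbmin' y ⟨a, c, hac, ⟨hya, hay⟩, hcy⟩ hyb
      · exact hac (Or.inr (P.le_trans _ _ _ hcy.1 hya))
    · exact hcmax' y ⟨hyb, hya⟩ hcy
  -- basic distinctness
  have hca : c ≠ a := fun e => hac (e ▸ pcomp_refl P a)
  have hba : b ≠ a := Ne.symm hab.2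
  have hbc : b ≠ c := Ne.symm hcb.2
  -- the block function
  set blk : Fin n → ℕ := fun x =>
    if x = a then 1 else if x = c then 2 else if x = b then 3 else
      if P.lt x b then 0 else 4 with hblk
  have hblka : blk a = 1 := by simp [hblk]
  have hblkc : blk c = 2 := by simp [hblk, hca]
  have hblkb : blk b = 3 := by simp [hblk, hba, hbc]
  have hblk0 : ∀ x, x ≠ a → x ≠ c → x ≠ b → P.lt x b → blk x = 0 := by
    intro x h1 h2 h3 h4
    simp only [hblk, if_neg h1, if_neg h2, if_neg h3, if_pos h4]
  have hblk4 : ∀ x, x ≠ a → x ≠ c → x ≠ b → ¬ P.lt x b → blk x = 4 := by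
    intro x h1 h2 h3 h4
    simp only [hblk, if_neg h1, if_neg h2, if_neg h3, if_neg h4]
  have hvals : ∀ x, x ≠ a → x ≠ c → x ≠ b → blk x = 0 ∨ blk x = 4 := by
    intro x h1 h2 h3
    by_cases h4 : P.lt x b
    · exact Or.inl (hblk0 x h1 h2 h3 h4)
    · exact Or.inr (hblk4 x h1 h2 h3 h4)
  have hsing1 : ∀ x, blk x = 1 → x = a := by
    intro x hx
    by_cases h1 : x = a
    · exact h1
    · exfalso
      by_cases h2 : x = c
      · rw [h2, hblkc] at hx; omega
      · by_cases h3 : x = b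
        · rw [h3, hblkb] at hx; omega
        · rcases hvals x h1 h2 h3 with h | h <;> omega
  have hsing2 : ∀ x, blk x = 2 → x = c := by
    intro x hx
    by_cases h2 : x = c
    · exact h2
    · exfalso
      by_cases h1 : x = a
      · rw [h1, hblka] at hx; omega
      · by_cases h3 : x = b
        · rw [h3, hblkb] at hx; omega
        · rcases hvals x h1 h2 h3 with h | h <;> omega
  have hsing3 : ∀ x, blk x = 3 → x = b := by
    intro x hx
    by_cases h3 : x = b
    · exact h3
    · exfalso
      by_cases h1 : x = a
      · rw [h1, hblka] at hx; omega
      · by_cases h2 : x = c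
        · rw [h2, hblkc] at hx; omega
        · rcases hvals x h1 h2 h3 with h | h <;> omega
  have hmono : ∀ x y, P.lt x y → blk x ≤ blk y := by
    intro x y hxy
    by_cases hxa : x = a
    · have hxy' : P.lt a y := hxa ▸ hxy
      by_cases hyb : y = b
      · rw [hxa, hyb, hblka, hblkb]; omega
      · have hya : y ≠ a := Ne.symm hxy'.2
        have hyc : y ≠ c := by rintro rfl; exact hac (Or.inl hxy'.1)
        have hylt : ¬ P.lt y b := fun hy => nb1 y ⟨hxy', hy⟩
        rw [hxa, hblka, hblk4 y hya hyc hyb hylt]; omega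
    · by_cases hxc : x = c
      · have hxy' : P.lt c y := hxc ▸ hxy
        by_cases hyb : y = b
        · rw [hxc, hyb, hblkc, hblkb]; omega
        · have hya : y ≠ a := by rintro rfl; exact hac (Or.inr hxy'.1)
          have hyc : y ≠ c := Ne.symm hxy'.2
          have hylt : ¬ P.lt y b := fun hy => nb2 y ⟨hxy', hy⟩
          rw [hxc, hblkc, hblk4 y hya hyc hyb hylt]; omega
      · by_cases hxb : x = b
        · have hxy' : P.lt b y := hxb ▸ hxy
          have hya : y ≠ a := by
            rintro rfl
            exact hab.2 (P.le_antisymm _ _ hab.1 hxy'.1)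
          have hyc : y ≠ c := by
            rintro rfl
            exact hcb.2 (P.le_antisymm _ _ hcb.1 hxy'.1)
          have hyb : y ≠ b := Ne.symm hxy'.2
          have hylt : ¬ P.lt y b := fun hy => hy.2 (P.le_antisymm _ _ hy.1 hxy'.1)
          rw [hxb, hblkb, hblk4 y hya hyc hyb hylt]; omega
        · by_cases hxlt : P.lt x b
          · rw [hblk0 x hxa hxc hxb hxlt]; omega
          · have hya : y ≠ a := by
              rintro rfl
              exact hxlt (P.lt_of_lt_of_le' hxy hab.1)
            have hyc : y ≠ c := by
              rintro rfl
              exact hxlt (P.lt_of_lt_of_le' hxy hcb.1)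
            have hyb : y ≠ b := by rintro rfl; exact hxlt hxy
            have hylt : ¬ P.lt y b := fun hy => hxlt (P.lt_trans' hxy hy)
            rw [hblk4 x hxa hxc hxb hxlt, hblk4 y hya hyc hyb hylt]
  obtain ⟨π, j, hj2, hlin, hp0, hp1, hp2⟩ :=
    exists_consec P a c b blk hmono hblka hsing1 hblkc hsing2 hblkb hsing3
  refine braid_fails_upper P hj2 π ?_ ?_ ?_ (H j hj2 π hlin)
  · rw [hp0, hp1]; exact hac
  · rw [hp1, hp2]; exact Or.inl hcb.1
  · rw [hp0, hp2]; exact Or.inl hab.1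

lemma forward_lower (P : FinPoset n)
    (H : ∀ j : ℕ, j + 2 < n → ∀ π : Equiv.Perm (Fin n), IsLinearExtension P π →
        tauOp P j (tauOp P (j + 1) (tauOp P j π)) =
          tauOp P (j + 1) (tauOp P j (tauOp P (j + 1) π)))
    (a0 c0 b0 : Fin n) (hac0 : ¬ PComp P a0 c0) (hab0 : P.lt b0 a0) (hcb0 : P.lt b0 c0) :
    False := by
  classical
  set m : Fin n → ℕ := fun x => (Finset.univ.filter (fun z => P.lt z x)).card with hm
  set T : Finset (Fin n) := Finset.univ.filter
    (fun b => ∃ a c, ¬ PComp P a c ∧ P.lt b a ∧ P.lt b c) with hT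
  have hTne : T.Nonempty := ⟨b0, by
    simp only [hT, Finset.mem_filter, Finset.mem_univ, true_and]
    exact ⟨a0, c0, hac0, hab0, hcb0⟩⟩
  obtain ⟨b, hbT, hbmax⟩ := T.exists_max_image m hTne
  rw [hT, Finset.mem_filter] at hbT
  obtain ⟨-, a1, c1, hac1, hab1, hcb1⟩ := hbT
  have hbmax' : ∀ x, (∃ a c, ¬ PComp P a c ∧ P.lt x a ∧ P.lt x c) → ¬ P.lt b x := by
    intro x hx hbx
    have hxT : x ∈ T := by
      simp only [hT, Finset.mem_filter, Finset.mem_univ, true_and]; exact hx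
    exact absurd (measure_lt P hbx) (not_lt.2 (hbmax x hxT))
  set A : Finset (Fin n) := Finset.univ.filter
    (fun a => P.lt b a ∧ ∃ c, ¬ PComp P a c ∧ P.lt b c) with hA
  have hAne : A.Nonempty := ⟨a1, by
    simp only [hA, Finset.mem_filter, Finset.mem_univ, true_and]
    exact ⟨hab1, c1, hac1, hcb1⟩⟩
  obtain ⟨a, haA, hamin⟩ := A.exists_min_image m hAne
  rw [hA, Finset.mem_filter] at haA
  obtain ⟨-, hab, c2, hac2, hcb2⟩ := haA
  have hamin' : ∀ x, (P.lt b x ∧ ∃ c, ¬ PComp P x c ∧ P.lt b c) → ¬ P.lt x a := by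
    intro x hx hxa
    have hxA : x ∈ A := by
      simp only [hA, Finset.mem_filter, Finset.mem_univ, true_and]; exact hx
    exact absurd (measure_lt P hxa) (not_lt.2 (hamin x hxA))
  set C : Finset (Fin n) := Finset.univ.filter
    (fun c => P.lt b c ∧ ¬ PComp P a c) with hC
  have hCne : C.Nonempty := ⟨c2, by
    simp only [hC, Finset.mem_filter, Finset.mem_univ, true_and]; exact ⟨hcb2, hac2⟩⟩
  obtain ⟨c, hcC, hcmin⟩ := C.exists_min_image m hCne
  rw [hC, Finset.mem_filter] at hcC
  obtain ⟨-, hcb, hac⟩ := hcC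
  have hcmin' : ∀ x, (P.lt b x ∧ ¬ PComp P a x) → ¬ P.lt x c := by
    intro x hx hxc
    have hxC : x ∈ C := by
      simp only [hC, Finset.mem_filter, Finset.mem_univ, true_and]; exact hx
    exact absurd (measure_lt P hxc) (not_lt.2 (hcmin x hxC))
  -- the two "no element strictly between" claims
  have nb1 : ∀ x, ¬ (P.lt b x ∧ P.lt x a) := by
    rintro x ⟨hbx, hxa⟩
    by_cases hxc : PComp P x c
    · rcases hxc with hxc | hxc
      · by_cases hxc' : x = c
        · exact hac (Or.inr (hxc' ▸ hxa).1)
        · exact hbmax' x ⟨a, c, hac, hxa, ⟨hxc, hxc'⟩⟩ hbx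
      · exact hac (Or.inr (P.le_trans _ _ _ hxc hxa.1))
    · exact hamin' x ⟨hbx, c, fun h => hxc h, hcb⟩ hxa
  have nb2 : ∀ y, ¬ (P.lt b y ∧ P.lt y c) := by
    rintro y ⟨hby, hyc⟩
    by_cases hya : PComp P a y
    · rcases hya with hya | hya
      · exact hac (Or.inl (P.le_trans _ _ _ hya hyc.1))
      · by_cases hya' : y = a
        · exact hac (Or.inl (hya' ▸ hyc).1)
        · exact hbmax' y ⟨a, c, hac, ⟨hya, hya'⟩, hyc⟩ hby
    · exact hcmin' y ⟨hby, hya⟩ hyc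
  -- basic distinctness
  have hca : a ≠ b := Ne.symm hab.2
  have hcbne : c ≠ b := Ne.symm hcb.2
  have hacne : c ≠ a := fun e => hac (e ▸ pcomp_refl P a)
  -- the block function : order is [low stuff, b, a, c, high stuff]
  set blk : Fin n → ℕ := fun x =>
    if x = b then 1 else if x = a then 2 else if x = c then 3 else
      if P.lt b x then 4 else 0 with hblk
  have hblkb : blk b = 1 := by simp [hblk]
  have hblka : blk a = 2 := by simp [hblk, hca]
  have hblkc : blk c = 3 := by simp [hblk, hcbne, hacne]
  have hblk4 : ∀ x, x ≠ b → x ≠ a → x ≠ c → P.lt b x → blk x = 4 := by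
    intro x h1 h2 h3 h4
    simp only [hblk, if_neg h1, if_neg h2, if_neg h3, if_pos h4]
  have hblk0 : ∀ x, x ≠ b → x ≠ a → x ≠ c → ¬ P.lt b x → blk x = 0 := by
    intro x h1 h2 h3 h4
    simp only [hblk, if_neg h1, if_neg h2, if_neg h3, if_neg h4]
  have hvals : ∀ x, x ≠ b → x ≠ a → x ≠ c → blk x = 0 ∨ blk x = 4 := by
    intro x h1 h2 h3
    by_cases h4 : P.lt b x
    · exact Or.inr (hblk4 x h1 h2 h3 h4)
    · exact Or.inl (hblk0 x h1 h2 h3 h4)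
  have hsing1 : ∀ x, blk x = 1 → x = b := by
    intro x hx
    by_cases h1 : x = b
    · exact h1
    · exfalso
      by_cases h2 : x = a
      · rw [h2, hblka] at hx; omega
      · by_cases h3 : x = c
        · rw [h3, hblkc] at hx; omega
        · rcases hvals x h1 h2 h3 with h | h <;> omega
  have hsing2 : ∀ x, blk x = 2 → x = a := by
    intro x hx
    by_cases h2 : x = a
    · exact h2
    · exfalso
      by_cases h1 : x = b
      · rw [h1, hblkb] at hx; omega
      · by_cases h3 : x = c
        · rw [h3, hblkc] at hx; omega
        · rcases hvals x h1 h2 h3 with h | h <;> omega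
  have hsing3 : ∀ x, blk x = 3 → x = c := by
    intro x hx
    by_cases h3 : x = c
    · exact h3
    · exfalso
      by_cases h1 : x = b
      · rw [h1, hblkb] at hx; omega
      · by_cases h2 : x = a
        · rw [h2, hblka] at hx; omega
        · rcases hvals x h1 h2 h3 with h | h <;> omega
  have hmono : ∀ x y, P.lt x y → blk x ≤ blk y := by
    intro x y hxy
    by_cases hxb : x = b
    · have hxy' : P.lt b y := hxb ▸ hxy
      by_cases hya : y = a
      · rw [hxb, hya, hblkb, hblka]; omega
      · by_cases hyc : y = c
        · rw [hxb, hyc, hblkb, hblkc]; omega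
        · have hyb : y ≠ b := Ne.symm hxy'.2
          rw [hxb, hblkb, hblk4 y hyb hya hyc hxy']; omega
    · by_cases hxa : x = a
      · have hxy' : P.lt a y := hxa ▸ hxy
        have hyb : y ≠ b := by
          rintro rfl
          exact hab.2 (P.le_antisymm _ _ hab.1 hxy'.1)
        have hya : y ≠ a := Ne.symm hxy'.2
        have hyc : y ≠ c := by rintro rfl; exact hac (Or.inl hxy'.1)
        have hby : P.lt b y := P.lt_trans' hab hxy'
        rw [hxa, hblka, hblk4 y hyb hya hyc hby]; omega
      · by_cases hxc : x = c
        · have hxy' : P.lt c y := hxc ▸ hxy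
          have hyb : y ≠ b := by
            rintro rfl
            exact hcb.2 (P.le_antisymm _ _ hcb.1 hxy'.1)
          have hya : y ≠ a := by rintro rfl; exact hac (Or.inr hxy'.1)
          have hyc : y ≠ c := Ne.symm hxy'.2
          have hby : P.lt b y := P.lt_trans' hcb hxy'
          rw [hxc, hblkc, hblk4 y hyb hya hyc hby]; omega
        · by_cases hxlt : P.lt b x
          · have hyb : y ≠ b := by
              rintro rfl
              exact hxlt.2 (P.le_antisymm _ _ hxlt.1 hxy.1)
            have hya : y ≠ a := by rintro rfl; exact nb1 x ⟨hxlt, hxy⟩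
            have hyc : y ≠ c := by rintro rfl; exact nb2 x ⟨hxlt, hxy⟩
            have hby : P.lt b y := P.lt_trans' hxlt hxy
            rw [hblk4 x hxb hxa hxc hxlt, hblk4 y hyb hya hyc hby]
          · rw [hblk0 x hxb hxa hxc hxlt]; omega
  obtain ⟨π, j, hj2, hlin, hp0, hp1, hp2⟩ :=
    exists_consec P b a c blk hmono hblkb hsing1 hblka hsing2 hblkc hsing3
  refine braid_fails_lower P hj2 π ?_ ?_ ?_ (H j hj2 π hlin)
  · rw [hp0, hp1]; exact Or.inl hab.1
  · rw [hp1, hp2]; exact hac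
  · rw [hp0, hp2]; exact Or.inl hcb.1

/-- The braid relations `π τ_j τ_{j+1} τ_j = π τ_{j+1} τ_j τ_{j+1}` hold for all
`1 ≤ j < n-1` (here `j` is 0-indexed, so the condition is `j + 2 < n`) and all
linear extensions `π` of `P` if and only if `P` is a disjoint union of chains. -/
theorem braid_iff_union_of_chains (P : FinPoset n) :
    (∀ j : ℕ, j + 2 < n → ∀ π : Equiv.Perm (Fin n), IsLinearExtension P π →
        tauOp P j (tauOp P (j + 1) (tauOp P j π)) =
          tauOp P (j + 1) (tauOp P j (tauOp P (j + 1) π))) ↔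
      IsUnionOfChains P := by
  constructor
  · intro H
    have htr : ∀ a b c, PComp P a b → PComp P b c → PComp P a c := by
      intro a b c hab hbc
      by_contra hac
      rcases hab with h1 | h1 <;> rcases hbc with h2 | h2
      · exact hac (Or.inl (P.le_trans _ _ _ h1 h2))
      · have hne1 : a ≠ b := by rintro rfl; exact hac (Or.inr h2)
        have hne2 : c ≠ b := by rintro rfl; exact hac (Or.inl h1)
        exact forward_upper P H a c b hac ⟨h1, hne1⟩ ⟨h2, hne2⟩
      · have hne1 : b ≠ a := by rintro rfl; exact hac (Or.inl h2)
        have hne2 : b ≠ c := by rintro rfl; exact hac (Or.inr h1)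
        exact forward_lower P H a c b hac ⟨h1, hne1⟩ ⟨h2, hne2⟩
      · exact hac (Or.inr (P.le_trans _ _ _ h2 h1))
    have hne : ∀ x : Fin n, (Finset.univ.filter (fun y => PComp P x y)).Nonempty :=
      fun x => ⟨x, by simp [pcomp_refl]⟩
    refine ⟨fun x => (Finset.univ.filter (fun y => PComp P x y)).min' (hne x), ?_, ?_⟩
    · intro a b hfeq
      have ha : PComp P a ((Finset.univ.filter (fun y => PComp P a y)).min' (hne a)) := by
        have := Finset.min'_mem (Finset.univ.filter (fun y => PComp P a y)) (hne a)
        simpa using this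
      have hb : PComp P b ((Finset.univ.filter (fun y => PComp P b y)).min' (hne b)) := by
        have := Finset.min'_mem (Finset.univ.filter (fun y => PComp P b y)) (hne b)
        simpa using this
      have hfeq' : (Finset.univ.filter (fun y => PComp P a y)).min' (hne a) =
          (Finset.univ.filter (fun y => PComp P b y)).min' (hne b) := hfeq
      rw [← hfeq'] at hb
      exact htr a _ b ha hb.symm
    · intro a b hle
      have hset : (Finset.univ.filter (fun y => PComp P a y)) =
          (Finset.univ.filter (fun y => PComp P b y)) := by
        ext y
        simp only [Finset.mem_filter, Finset.mem_univ, true_and]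
        constructor
        · intro h; exact htr b a y (Or.inr hle) h
        · intro h; exact htr a b y (Or.inl hle) h
      apply le_antisymm
      · apply Finset.min'_le
        rw [hset]
        exact Finset.min'_mem _ _
      · apply Finset.min'_le
        rw [← hset]
        exact Finset.min'_mem _ _
  · rintro ⟨f, hf1, hf2⟩ j hj π _
    have htr : ∀ a b c, PComp P a b → PComp P b c → PComp P a c := by
      intro a b c hab hbc
      have e1 : f a = f b := by
        rcases hab with h | h
        exacts [hf2 a b h, (hf2 b a h).symm]
      have e2 : f b = f c := by
        rcases hbc with h | h
        exacts [hf2 b c h, (hf2 c b h).symm]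
      exact hf1 a c (e1.trans e2)
    exact braid_holds P hj π htr
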